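/- Let k ≥ 1 and n = 2k + 1, and let B ⊆ ℤ^n be the subgroup generated by the 2k vectors 2(e_{2i−1} − e_{2i}) and 2(e_{2i−1} + e_{2i}) for 1 ≤ i ≤ k. Then the image of the set S = {x ∈ ℤ^n : x_i ∈ {−1, 1} for all i} under the quotient map ℤ^n → ℤ^n / B has exactly 2^{k+1} elements. -/

import Mathlib

namespace Stmt5

variable (k : ℕ)

theorem ia_lt (i : Fin k) : 2*(i:ℕ) < 2*k+1 := by have := i.isLt; omega
theorem ib_lt (i : Fin k) : 2*(i:ℕ)+1 < 2*k+1 := by have := i.isLt; omega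
def ia (i : Fin k) : Fin (2*k+1) := ⟨2*i, ia_lt k i⟩
def ib (i : Fin k) : Fin (2*k+1) := ⟨2*i+1, ib_lt k i⟩
def la : Fin (2*k+1) := ⟨2*k, by omega⟩

def sgn (b : Bool) : ℤ := if b then 1 else -1

lemma sgn_mem (b : Bool) : sgn b = 1 ∨ sgn b = -1 := by cases b <;> simp [sgn]

def rep (b : Fin (k+1) → Bool) : Fin (2*k+1) → ℤ := fun j =>
  if (j : ℕ) = 2*k then sgn (b (Fin.last k))
  else if (j:ℕ) % 2 = 0 then 1
  else sgn (b ⟨(j:ℕ)/2, by have := j.isLt; omega⟩)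

lemma rep_ia (b : Fin (k+1) → Bool) (i : Fin k) : rep k b (ia k i) = 1 := by
  have := i.isLt
  simp only [rep, ia]
  simp only [show ¬ (2*(i:ℕ) = 2*k) by omega, show 2*(i:ℕ) % 2 = 0 by omega, if_false, if_true]

lemma rep_ib (b : Fin (k+1) → Bool) (i : Fin k) : rep k b (ib k i) = sgn (b i.castSucc) := by
  have := i.isLt
  simp only [rep, ib]
  simp only [show ¬ (2*(i:ℕ)+1 = 2*k) by omega, show ¬ ((2*(i:ℕ)+1) % 2 = 0) by omega, if_false]
  have : (⟨(2*(i:ℕ)+1)/2, by have := i.isLt; omega⟩ : Fin (k+1)) = i.castSucc := by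
    apply Fin.ext
    simp
    omega
  rw [this]

lemma rep_la (b : Fin (k+1) → Bool) : rep k b (la k) = sgn (b (Fin.last k)) := by
  simp [rep, la]

lemma rep_mem (b : Fin (k+1) → Bool) : ∀ j, rep k b j = 1 ∨ rep k b j = -1 := by
  intro j
  simp only [rep]
  split
  · exact sgn_mem _
  split
  · left; rfl
  · exact sgn_mem _

def phi : (Fin (2*k+1) → ℤ) →+ (Fin (k+1) → ZMod 4) where
  toFun x i := if h : (i:ℕ) < k then ((x (ia k ⟨i, h⟩) + x (ib k ⟨i,h⟩) : ℤ) : ZMod 4)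
    else ((x (la k) : ℤ) : ZMod 4)
  map_zero' := by funext i; by_cases h : (i:ℕ) < k <;> simp [h]
  map_add' x y := by
    funext i
    by_cases h : (i:ℕ) < k <;> simp [h] <;> push_cast <;> ring

lemma phi_rep (b : Fin (k+1) → Bool) (i : Fin (k+1)) :
    phi k (rep k b) i = if h : (i:ℕ) < k then ((1 + sgn (b ⟨i, by omega⟩) : ℤ) : ZMod 4)
      else ((sgn (b (Fin.last k)) : ℤ) : ZMod 4) := by
  simp only [phi, AddMonoidHom.coe_mk, ZeroHom.coe_mk]
  split
  · rename_i h
    rw [rep_ia, rep_ib]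
    rfl
  · rw [rep_la]


def gm (i : Fin k) : Fin (2*k+1) → ℤ :=
  (2:ℤ) • (Pi.single (ia k i) (1:ℤ) - Pi.single (ib k i) (1:ℤ))
def gp (i : Fin k) : Fin (2*k+1) → ℤ :=
  (2:ℤ) • (Pi.single (ia k i) (1:ℤ) + Pi.single (ib k i) (1:ℤ))

lemma gp_pair (i j : Fin k) : gp k i (ia k j) + gp k i (ib k j) = if i = j then 4 else 0 := by
  have hvi := i.isLt; have hvj := j.isLt
  rcases eq_or_ne i j with h | h
  · subst h
    simp [gp, Pi.single_apply, ia, ib, Fin.ext_iff]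
  · have h1 : (i:ℕ) ≠ (j:ℕ) := fun hc => h (Fin.ext hc)
    simp [gp, Pi.single_apply, ia, ib, Fin.ext_iff]
    omega

lemma gm_pair (i j : Fin k) : gm k i (ia k j) + gm k i (ib k j) = 0 := by
  have hvi := i.isLt; have hvj := j.isLt
  rcases eq_or_ne i j with h | h
  · subst h
    simp [gm, Pi.single_apply, ia, ib, Fin.ext_iff]
  · have h1 : (i:ℕ) ≠ (j:ℕ) := fun hc => h (Fin.ext hc)
    simp [gm, Pi.single_apply, ia, ib, Fin.ext_iff]
    omega

lemma gp_la (i : Fin k) : gp k i (la k) = 0 := by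
  have hvi := i.isLt
  simp [gp, Pi.single_apply, ia, ib, la, Fin.ext_iff]
  omega

lemma gm_la (i : Fin k) : gm k i (la k) = 0 := by
  have hvi := i.isLt
  simp [gm, Pi.single_apply, ia, ib, la, Fin.ext_iff]
  omega

lemma phi_gp (i : Fin k) : phi k (gp k i) = 0 := by
  funext j
  simp only [phi, AddMonoidHom.coe_mk, ZeroHom.coe_mk]
  split
  · rw [gp_pair]
    split <;> simp <;> decide
  · rw [gp_la]; simp
  
lemma phi_gm (i : Fin k) : phi k (gm k i) = 0 := by
  funext j
  simp only [phi, AddMonoidHom.coe_mk, ZeroHom.coe_mk]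
  split
  · rw [gm_pair]; simp
  · rw [gm_la]; simp


lemma pair_decomp (d : Fin (2*k+1) → ℤ) (hd : d (la k) = 0) :
    d = ∑ i : Fin k, (Pi.single (ia k i) (d (ia k i)) + Pi.single (ib k i) (d (ib k i))) := by
  funext j
  rw [Finset.sum_apply]
  obtain ⟨jv, hj⟩ := j
  rcases Nat.lt_or_ge jv (2*k) with hlt | hge
  · -- jv < 2k : exactly one pair contributes
    set m : Fin k := ⟨jv / 2, by omega⟩ with hm
    rw [Finset.sum_eq_single m]
    · rcases Nat.even_or_odd jv with ⟨c, hc⟩ | ⟨c, hc⟩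
      · have hja : (⟨jv, hj⟩ : Fin (2*k+1)) = ia k m := by
          apply Fin.ext; simp [ia, hm]; omega
        rw [hja]
        simp only [Pi.add_apply, Pi.single_apply]
        rw [if_neg (show ¬ ia k m = ib k m by simp only [ia, ib, Fin.mk.injEq]; omega)]
        simp
      · have hjb : (⟨jv, hj⟩ : Fin (2*k+1)) = ib k m := by
          apply Fin.ext; simp [ib, hm]; omega
        rw [hjb]
        simp only [Pi.add_apply, Pi.single_apply]
        rw [if_neg (show ¬ ib k m = ia k m by simp only [ia, ib, Fin.mk.injEq]; omega)]
        simp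
    · intro i _ hi
      have hi' : (i : ℕ) ≠ jv / 2 := fun hc => hi (Fin.ext hc)
      simp only [Pi.add_apply, Pi.single_apply]
      rw [if_neg (by simp [ia, Fin.ext_iff]; omega), if_neg (by simp [ib, Fin.ext_iff]; omega)]
      ring
    · simp
  · -- jv = 2k : it is la, all terms vanish
    have hjv : jv = 2*k := by omega
    have hla : (⟨jv, hj⟩ : Fin (2*k+1)) = la k := Fin.ext (by simp [la, hjv])
    rw [hla, hd]
    symm
    apply Finset.sum_eq_zero
    intro i _
    have := i.isLt
    simp only [Pi.add_apply, Pi.single_apply]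
    rw [if_neg (by simp [ia, la, Fin.ext_iff]; omega), if_neg (by simp [ib, la, Fin.ext_iff]; omega)]
    ring

/-- choice of representative bits for a ±1 vector -/
def bits (x : Fin (2*k+1) → ℤ) : Fin (k+1) → Bool := fun i =>
  if h : (i:ℕ) < k then decide (x (ia k ⟨i, h⟩) = x (ib k ⟨i, h⟩))
  else decide (x (la k) = 1)

lemma bits_lt (x : Fin (2*k+1) → ℤ) (i : Fin k) :
    bits k x i.castSucc = decide (x (ia k i) = x (ib k i)) := by
  have h := i.isLt
  simp only [bits]
  rw [dif_pos (by simpa using h)]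
  have hidx : (⟨((i.castSucc : Fin (k+1)) : ℕ), by simpa using h⟩ : Fin k) = i :=
    Fin.ext (by simp)
  rw [hidx]

lemma bits_last (x : Fin (2*k+1) → ℤ) :
    bits k x (Fin.last k) = decide (x (la k) = 1) := by
  simp [bits]

lemma diff_mem (B : AddSubgroup (Fin (2*k+1) → ℤ))
    (hgp : ∀ i, gp k i ∈ B) (hgm : ∀ i, gm k i ∈ B)
    (x : Fin (2*k+1) → ℤ) (hx : ∀ j, x j = 1 ∨ x j = -1) :
    x - rep k (bits k x) ∈ B := by
  set d := x - rep k (bits k x) with hd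
  have hdla : d (la k) = 0 := by
    simp only [hd, Pi.sub_apply, rep_la, bits_last]
    rcases hx (la k) with h | h <;> simp [h, sgn]
  rw [pair_decomp k d hdla]
  apply AddSubgroup.sum_mem
  intro i _
  have hda : d (ia k i) = x (ia k i) - 1 := by simp [hd, rep_ia]
  have hdb : d (ib k i) = x (ib k i) - sgn (decide (x (ia k i) = x (ib k i))) := by
    simp [hd, rep_ib, bits_lt]
  rcases hx (ia k i) with h1 | h1 <;> rcases hx (ib k i) with h2 | h2
  · -- (1,1): term is 0
    have e : sgn (decide ((1:ℤ) = 1)) = 1 := by norm_num [sgn]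
    have : Pi.single (ia k i) (d (ia k i)) + Pi.single (ib k i) (d (ib k i))
        = (0 : Fin (2*k+1) → ℤ) := by
      rw [hda, hdb, h1, h2, e]; simp
    rw [this]; exact zero_mem B
  · -- (1,-1): term is 0
    have e : sgn (decide ((1:ℤ) = -1)) = -1 := by norm_num [sgn]
    have : Pi.single (ia k i) (d (ia k i)) + Pi.single (ib k i) (d (ib k i))
        = (0 : Fin (2*k+1) → ℤ) := by
      rw [hda, hdb, h1, h2, e]; norm_num
    rw [this]; exact zero_mem B
  · -- (-1,1): term is -gm i
    have e : sgn (decide ((-1:ℤ) = 1)) = -1 := by norm_num [sgn]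
    have : Pi.single (ia k i) (d (ia k i)) + Pi.single (ib k i) (d (ib k i)) = -(gm k i) := by
      rw [hda, hdb, h1, h2, e]
      funext j
      simp only [gm, Pi.neg_apply, Pi.smul_apply, Pi.sub_apply, Pi.add_apply,
        Pi.single_apply, smul_eq_mul]
      split_ifs <;> ring
    rw [this]; exact neg_mem (hgm i)
  · -- (-1,-1): term is -gp i
    have e : sgn (decide ((-1:ℤ) = -1)) = 1 := by norm_num [sgn]
    have : Pi.single (ia k i) (d (ia k i)) + Pi.single (ib k i) (d (ib k i)) = -(gp k i) := by
      rw [hda, hdb, h1, h2, e]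
      funext j
      simp only [gp, Pi.neg_apply, Pi.smul_apply, Pi.sub_apply, Pi.add_apply,
        Pi.single_apply, smul_eq_mul]
      split_ifs <;> ring
    rw [this]; exact neg_mem (hgp i)


lemma rep_inj {b b' : Fin (k+1) → Bool} (h : phi k (rep k b) = phi k (rep k b')) :
    b = b' := by
  funext i
  have hi := congrFun h i
  rw [phi_rep, phi_rep] at hi
  by_cases hlt : (i : ℕ) < k
  · rw [dif_pos hlt, dif_pos hlt] at hi
    have he : (⟨(i:ℕ), by omega⟩ : Fin (k+1)) = i := Fin.ext rfl
    rw [he] at hi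
    revert hi
    cases hb : b i <;> cases hb' : b' i <;> simp [sgn] <;> decide
  · rw [dif_neg hlt, dif_neg hlt] at hi
    have he : i = Fin.last k := Fin.ext (by have := i.isLt; simp [Fin.last]; omega)
    rw [he]
    revert hi
    cases hb : b (Fin.last k) <;> cases hb' : b' (Fin.last k) <;> simp [sgn] <;> decide

end Stmt5

/-- Coset counting: for `n = 2k+1` and `B ⊆ ℤ^n` the subgroup generated by
`2(e_{2i−1} − e_{2i})` and `2(e_{2i−1} + e_{2i})`, the image of the set of
`±1`-vectors in `ℤ^n / B` has exactly `2^(k+1)` elements. -/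
theorem stmt_5 (k : ℕ) (hk : 1 ≤ k)
    (B : AddSubgroup (Fin (2 * k + 1) → ℤ))
    (hB : B = AddSubgroup.closure
      ((Set.range fun i : Fin k =>
          (2 : ℤ) • (Pi.single (⟨2 * (i : ℕ), by have := i.isLt; omega⟩ : Fin (2 * k + 1)) (1 : ℤ)
            - Pi.single (⟨2 * (i : ℕ) + 1, by have := i.isLt; omega⟩ : Fin (2 * k + 1)) (1 : ℤ))) ∪
        (Set.range fun i : Fin k =>
          (2 : ℤ) • (Pi.single (⟨2 * (i : ℕ), by have := i.isLt; omega⟩ : Fin (2 * k + 1)) (1 : ℤ)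
            + Pi.single (⟨2 * (i : ℕ) + 1, by have := i.isLt; omega⟩ : Fin (2 * k + 1)) (1 : ℤ))))) :
    Set.ncard
      ((fun x : Fin (2 * k + 1) → ℤ => (QuotientAddGroup.mk x : (Fin (2 * k + 1) → ℤ) ⧸ B)) ''
        {x : Fin (2 * k + 1) → ℤ | ∀ i, x i = 1 ∨ x i = -1}) = 2 ^ (k + 1) := by
  classical
  open Stmt5 in
  have hgm : ∀ i : Fin k, gm k i ∈ B := by
    intro i
    rw [hB]
    exact AddSubgroup.subset_closure (Or.inl ⟨i, rfl⟩)
  have hgp : ∀ i : Fin k, gp k i ∈ B := by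
    intro i
    rw [hB]
    exact AddSubgroup.subset_closure (Or.inr ⟨i, rfl⟩)
  have hker : B ≤ (Stmt5.phi k).ker := by
    rw [hB, AddSubgroup.closure_le]
    rintro v (⟨i, rfl⟩ | ⟨i, rfl⟩)
    · exact AddMonoidHom.mem_ker.mpr (Stmt5.phi_gm k i)
    · exact AddMonoidHom.mem_ker.mpr (Stmt5.phi_gp k i)
  have himg : ((fun x : Fin (2 * k + 1) → ℤ =>
        (QuotientAddGroup.mk x : (Fin (2 * k + 1) → ℤ) ⧸ B)) ''
        {x : Fin (2 * k + 1) → ℤ | ∀ i, x i = 1 ∨ x i = -1})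
      = Set.range (fun b : Fin (k+1) → Bool =>
        (QuotientAddGroup.mk (Stmt5.rep k b) : (Fin (2 * k + 1) → ℤ) ⧸ B)) := by
    apply Set.Subset.antisymm
    · rintro _ ⟨x, hx, rfl⟩
      refine ⟨Stmt5.bits k x, ?_⟩
      rw [QuotientAddGroup.eq, neg_add_eq_sub]
      exact Stmt5.diff_mem k B hgp hgm x hx
    · rintro _ ⟨b, rfl⟩
      exact ⟨Stmt5.rep k b, Stmt5.rep_mem k b, rfl⟩
  have hinj : Function.Injective (fun b : Fin (k+1) → Bool =>
      (QuotientAddGroup.mk (Stmt5.rep k b) : (Fin (2 * k + 1) → ℤ) ⧸ B)) := by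
    intro b b' h
    apply Stmt5.rep_inj k
    have hmem : -(Stmt5.rep k b) + Stmt5.rep k b' ∈ B := QuotientAddGroup.eq.mp h
    have h0 : Stmt5.phi k (-(Stmt5.rep k b) + Stmt5.rep k b') = 0 :=
      AddMonoidHom.mem_ker.mp (hker hmem)
    rw [map_add, map_neg, neg_add_eq_zero] at h0
    exact h0
  rw [himg, ← Set.image_univ, Set.ncard_image_of_injective _ hinj, Set.ncard_univ]
  simp [Nat.card_eq_fintype_card]
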